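/- Fix d ≥ 1, ω ∈ ℝ^d, a nonzero integer vector h ∈ ℤ^d with h·ω ≠ 0, real numbers a < b, and an arbitrary sequence (α_k)_{k≥1} in ℝ^d. Define the normalized Weyl sums S_h(N, τ) = (1/N)∑_{k=1}^N exp(2πi(h·α_k + k τ (h·ω))). Then there exists a constant C > 0, depending only on a, b and h·ω, such that ∫_a^b |S_h(N, τ)|² dτ ≤ C (log N)/N for all integers N ≥ 2. -/

import Mathlib

open MeasureTheory Filter


lemma harmonic_real (N : ℕ) : ∑ m ∈ Finset.Icc 1 N, ((m:ℝ))⁻¹ ≤ 1 + Real.log N := by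
  have h := harmonic_le_one_add_log N
  have : ((harmonic N : ℚ) : ℝ) = ∑ m ∈ Finset.Icc 1 N, ((m:ℝ))⁻¹ := by
    rw [harmonic_eq_sum_Icc]; push_cast; ring
  rw [← this]; exact_mod_cast h

lemma sum_inv_dist_le (N k : ℕ) (hk : k ∈ Finset.Icc 1 N) :
    ∑ l ∈ (Finset.Icc 1 N).erase k, (|(k:ℝ) - (l:ℝ)|)⁻¹ ≤ 2 * (1 + Real.log N) := by
  classical
  rw [← Finset.sum_filter_add_sum_filter_not ((Finset.Icc 1 N).erase k) (· < k)]
  have hsub : ∀ (s : Finset ℕ), s ⊆ Finset.Icc 1 N →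
      ∑ m ∈ s, ((m:ℝ))⁻¹ ≤ 1 + Real.log N := by
    intro s hs
    refine le_trans (Finset.sum_le_sum_of_subset_of_nonneg hs ?_) (harmonic_real N)
    intro m _ _; positivity
  have h1 : ∑ l ∈ ((Finset.Icc 1 N).erase k).filter (· < k), (|(k:ℝ) - (l:ℝ)|)⁻¹
      ≤ 1 + Real.log N := by
    have heq : ∑ l ∈ ((Finset.Icc 1 N).erase k).filter (· < k), (|(k:ℝ) - (l:ℝ)|)⁻¹
        = ∑ m ∈ (((Finset.Icc 1 N).erase k).filter (· < k)).image (fun l => k - l),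
            ((m:ℝ))⁻¹ := by
      rw [Finset.sum_image]
      · refine Finset.sum_congr rfl fun l hl => ?_
        have hlk : l < k := (Finset.mem_filter.1 hl).2
        rw [Nat.cast_sub hlk.le, abs_of_pos (sub_pos.2 (by exact_mod_cast hlk))]
      · intro x hx y hy hxy
        have hx' : x < k := (Finset.mem_filter.1 hx).2
        have hy' : y < k := (Finset.mem_filter.1 hy).2
        simp only at hxy
        omega
    rw [heq]
    refine hsub _ ?_
    intro m hm
    obtain ⟨l, hl, rfl⟩ := Finset.mem_image.1 hm
    have h1 := Finset.mem_filter.1 hl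
    have h2 := Finset.mem_erase.1 h1.1
    have := Finset.mem_Icc.1 h2.2
    have := Finset.mem_Icc.1 hk
    simp only [Finset.mem_Icc]
    omega
  have h2 : ∑ l ∈ ((Finset.Icc 1 N).erase k).filter (fun l => ¬ l < k), (|(k:ℝ) - (l:ℝ)|)⁻¹
      ≤ 1 + Real.log N := by
    have heq : ∑ l ∈ ((Finset.Icc 1 N).erase k).filter (fun l => ¬ l < k), (|(k:ℝ) - (l:ℝ)|)⁻¹
        = ∑ m ∈ (((Finset.Icc 1 N).erase k).filter (fun l => ¬ l < k)).image (fun l => l - k),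
            ((m:ℝ))⁻¹ := by
      rw [Finset.sum_image]
      · refine Finset.sum_congr rfl fun l hl => ?_
        have hne : l ≠ k := (Finset.mem_erase.1 (Finset.mem_filter.1 hl).1).1
        have hlk : k < l := lt_of_le_of_ne (not_lt.1 (Finset.mem_filter.1 hl).2) (Ne.symm hne)
        rw [Nat.cast_sub hlk.le, abs_sub_comm, abs_of_pos (sub_pos.2 (by exact_mod_cast hlk))]
      · intro x hx y hy hxy
        have hx' : ¬ x < k := (Finset.mem_filter.1 hx).2
        have hy' : ¬ y < k := (Finset.mem_filter.1 hy).2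
        simp only at hxy
        omega
    rw [heq]
    refine hsub _ ?_
    intro m hm
    obtain ⟨l, hl, rfl⟩ := Finset.mem_image.1 hm
    have h1 := Finset.mem_filter.1 hl
    have h2' := Finset.mem_erase.1 h1.1
    have := Finset.mem_Icc.1 h2'.2
    have := Finset.mem_Icc.1 hk
    simp only [Finset.mem_Icc]
    omega
  linarith

lemma mean_square (θ : ℝ) (hhω : θ ≠ 0) (a b : ℝ) (hab : a < b) (A : ℕ → ℝ)
    (N : ℕ) (hN : 2 ≤ N) :
    (∫ τ in a..b,
        (‖(1 / (N : ℂ)) * ∑ k ∈ Finset.Icc 1 N,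
          Complex.exp (2 * Real.pi * Complex.I *
            ((A k : ℝ) + (k : ℝ) * τ * (θ : ℝ)))‖) ^ 2)
      ≤ ((b - a) / Real.log 2 + 2 / (Real.pi * |θ|) * (1 / Real.log 2 + 1))
          * Real.log N / N := by
  have hπ : (0:ℝ) < Real.pi := Real.pi_pos
  have hθ' : (0:ℝ) < |θ| := abs_pos.2 hhω
  have hba : (0:ℝ) < b - a := by linarith
  have hNR : (0:ℝ) < N := by positivity
  set z : ℕ → ℝ → ℂ := fun k τ => Complex.exp (2 * Real.pi * Complex.I *
      ((A k : ℂ) + ((k : ℝ) : ℂ) * (τ : ℂ) * (θ : ℂ))) with hzdef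
  set S : ℝ → ℂ := fun τ => ∑ k ∈ Finset.Icc 1 N, z k τ with hSdef
  set c : ℕ → ℕ → ℂ := fun k l =>
      2 * (Real.pi : ℂ) * Complex.I * (((k : ℝ) : ℂ) - ((l : ℝ) : ℂ)) * (θ : ℂ) with hcdef
  set w : ℕ → ℕ → ℂ := fun k l =>
      Complex.exp (2 * (Real.pi : ℂ) * Complex.I * ((A k - A l : ℝ) : ℂ)) with hwdef
  -- continuity and integrability
  have hzc : ∀ k, Continuous (z k) := by
    intro k
    apply Complex.continuous_exp.comp
    fun_prop
  have hprodc : ∀ k l, Continuous (fun τ => z k τ * (starRingEnd ℂ) (z l τ)) := by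
    intro k l
    exact (hzc k).mul (Complex.continuous_conj.comp (hzc l))
  have hSc : Continuous S := continuous_finset_sum _ fun k _ => hzc k
  have hSSc : Continuous (fun τ => S τ * (starRingEnd ℂ) (S τ)) :=
    hSc.mul (Complex.continuous_conj.comp hSc)
  -- product identity
  have hzw : ∀ k l (τ : ℝ), z k τ * (starRingEnd ℂ) (z l τ)
      = w k l * Complex.exp (c k l * τ) := by
    intro k l τ
    rw [hzdef, hwdef, hcdef]
    simp only
    rw [← Complex.exp_conj, ← Complex.exp_add, ← Complex.exp_add]
    congr 1
    simp only [map_mul, map_add, Complex.conj_I, Complex.conj_ofReal, map_ofNat]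
    push_cast
    ring
  -- expansion of the complex integral
  have hTeq : (∫ τ in a..b, S τ * (starRingEnd ℂ) (S τ))
      = ∑ k ∈ Finset.Icc 1 N, ∑ l ∈ Finset.Icc 1 N,
          w k l * (∫ τ in a..b, Complex.exp (c k l * τ)) := by
    have hpt : ∀ τ : ℝ, S τ * (starRingEnd ℂ) (S τ)
        = ∑ k ∈ Finset.Icc 1 N, ∑ l ∈ Finset.Icc 1 N,
            w k l * Complex.exp (c k l * τ) := by
      intro τ
      rw [hSdef]
      simp only [map_sum, Finset.sum_mul_sum]
      exact Finset.sum_congr rfl fun k _ => Finset.sum_congr rfl fun l _ => hzw k l τ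
    rw [intervalIntegral.integral_congr (g := fun τ => ∑ k ∈ Finset.Icc 1 N,
        ∑ l ∈ Finset.Icc 1 N, w k l * Complex.exp (c k l * τ)) (fun τ _ => hpt τ)]
    rw [intervalIntegral.integral_finset_sum]
    · refine Finset.sum_congr rfl fun k _ => ?_
      rw [intervalIntegral.integral_finset_sum]
      · exact Finset.sum_congr rfl fun l _ => intervalIntegral.integral_const_mul _ _
      · intro l _
        exact (Continuous.intervalIntegrable (by fun_prop) a b)
    · intro k _
      exact (Continuous.intervalIntegrable (by fun_prop) a b)
  -- diagonal integral
  have hdiag : ∀ k : ℕ, (∫ τ in a..b, Complex.exp (c k k * τ)) = ((b - a : ℝ) : ℂ) := by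
    intro k
    have hc0 : c k k = 0 := by rw [hcdef]; simp
    simp [hc0]
  -- off-diagonal bound
  have hoff : ∀ k l : ℕ, k ≠ l →
      ‖∫ τ in a..b, Complex.exp (c k l * τ)‖
        ≤ (Real.pi * |θ|)⁻¹ * (|(k:ℝ) - (l:ℝ)|)⁻¹ := by
    intro k l hkl
    have hsub : ((k : ℝ) : ℂ) - ((l : ℝ) : ℂ) = (((k:ℝ) - (l:ℝ) : ℝ) : ℂ) := by push_cast; ring
    have hne : c k l ≠ 0 := by
      rw [hcdef]
      simp only
      rw [hsub]
      have h1 : ((k:ℝ) - (l:ℝ)) ≠ 0 := sub_ne_zero.2 (by exact_mod_cast hkl)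
      simp [Complex.ext_iff, Real.pi_ne_zero, Complex.I_ne_zero, h1, hhω]
    rw [integral_exp_mul_complex hne]
    have hre : ∀ x : ℝ, (c k l * (x : ℂ)).re = 0 := by
      intro x
      rw [hcdef]
      simp [Complex.mul_re, Complex.mul_im]
    have habs1 : ‖Complex.exp (c k l * b)‖ = 1 := by
      rw [Complex.norm_exp, hre, Real.exp_zero]
    have habs2 : ‖Complex.exp (c k l * a)‖ = 1 := by
      rw [Complex.norm_exp, hre, Real.exp_zero]
    have habsc : ‖c k l‖ = 2 * Real.pi * |(k:ℝ) - (l:ℝ)| * |θ| := by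
      rw [hcdef]
      simp only [hsub, norm_mul, Complex.norm_I, Complex.norm_real, Complex.norm_two, Real.norm_eq_abs]
      rw [abs_of_pos hπ]
      ring
    rw [norm_div, habsc]
    have h2 : ‖Complex.exp (c k l * b) - Complex.exp (c k l * a)‖ ≤ 2 := by
      calc ‖Complex.exp (c k l * b) - Complex.exp (c k l * a)‖
          ≤ ‖Complex.exp (c k l * b)‖ + ‖Complex.exp (c k l * a)‖ :=
            norm_sub_le _ _
        _ = 2 := by rw [habs1, habs2]; norm_num
    have hklpos : (0:ℝ) < |(k:ℝ) - (l:ℝ)| :=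
      abs_pos.2 (sub_ne_zero.2 (by exact_mod_cast hkl))
    rw [div_le_iff₀ (by positivity)]
    calc ‖Complex.exp (c k l * b) - Complex.exp (c k l * a)‖ ≤ 2 := h2
      _ = (Real.pi * |θ|)⁻¹ * (|(k:ℝ) - (l:ℝ)|)⁻¹ * (2 * Real.pi * |(k:ℝ) - (l:ℝ)| * |θ|) := by
          field_simp
  -- |w k l| = 1
  have hwabs : ∀ k l : ℕ, ‖w k l‖ = 1 := by
    intro k l
    rw [hwdef]
    simp only
    rw [Complex.norm_exp]
    have : (2 * (Real.pi : ℂ) * Complex.I * ((A k - A l : ℝ) : ℂ)).re = 0 := by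
      simp [Complex.mul_re, Complex.mul_im]
    rw [this, Real.exp_zero]
  -- bound on |T|
  have hT : ‖∫ τ in a..b, S τ * (starRingEnd ℂ) (S τ)‖
      ≤ (N:ℝ) * ((b - a) + (Real.pi * |θ|)⁻¹ * (2 * (1 + Real.log N))) := by
    rw [hTeq]
    calc ‖∑ k ∈ Finset.Icc 1 N, ∑ l ∈ Finset.Icc 1 N,
            w k l * (∫ τ in a..b, Complex.exp (c k l * τ))‖
        ≤ ∑ k ∈ Finset.Icc 1 N, ‖∑ l ∈ Finset.Icc 1 N,
            w k l * (∫ τ in a..b, Complex.exp (c k l * τ))‖ := norm_sum_le _ _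
      _ ≤ ∑ k ∈ Finset.Icc 1 N, ((b - a) + (Real.pi * |θ|)⁻¹ * (2 * (1 + Real.log N))) := by
          refine Finset.sum_le_sum fun k hk => ?_
          calc ‖∑ l ∈ Finset.Icc 1 N,
                  w k l * (∫ τ in a..b, Complex.exp (c k l * τ))‖
              ≤ ∑ l ∈ Finset.Icc 1 N,
                  ‖w k l * (∫ τ in a..b, Complex.exp (c k l * τ))‖ :=
                norm_sum_le _ _
            _ = ∑ l ∈ Finset.Icc 1 N,
                  ‖∫ τ in a..b, Complex.exp (c k l * τ)‖ := by
                refine Finset.sum_congr rfl fun l _ => ?_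
                rw [norm_mul, hwabs, one_mul]
            _ = ‖∫ τ in a..b, Complex.exp (c k k * τ)‖
                + ∑ l ∈ (Finset.Icc 1 N).erase k,
                    ‖∫ τ in a..b, Complex.exp (c k l * τ)‖ :=
                (Finset.add_sum_erase _ _ hk).symm
            _ ≤ (b - a) + (Real.pi * |θ|)⁻¹ * (2 * (1 + Real.log N)) := by
                gcongr ?_ + ?_
                · rw [hdiag, Complex.norm_real, Real.norm_eq_abs, abs_of_pos hba]
                · calc ∑ l ∈ (Finset.Icc 1 N).erase k,
                        ‖∫ τ in a..b, Complex.exp (c k l * τ)‖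
                      ≤ ∑ l ∈ (Finset.Icc 1 N).erase k,
                          (Real.pi * |θ|)⁻¹ * (|(k:ℝ) - (l:ℝ)|)⁻¹ := by
                        refine Finset.sum_le_sum fun l hl => ?_
                        exact hoff k l (Finset.mem_erase.1 hl).1.symm
                    _ = (Real.pi * |θ|)⁻¹ * ∑ l ∈ (Finset.Icc 1 N).erase k,
                          (|(k:ℝ) - (l:ℝ)|)⁻¹ := by rw [Finset.mul_sum]
                    _ ≤ (Real.pi * |θ|)⁻¹ * (2 * (1 + Real.log N)) :=
                        mul_le_mul_of_nonneg_left (sum_inv_dist_le N k hk) (by positivity)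
      _ = (N:ℝ) * ((b - a) + (Real.pi * |θ|)⁻¹ * (2 * (1 + Real.log N))) := by
          rw [Finset.sum_const, Nat.card_Icc]
          simp only [Nat.add_sub_cancel, nsmul_eq_mul]
  -- identify the real integral
  have hIeq : (∫ τ in a..b,
        (‖(1 / (N : ℂ)) * ∑ k ∈ Finset.Icc 1 N,
          Complex.exp (2 * Real.pi * Complex.I *
            ((A k : ℝ) + (k : ℝ) * τ * (θ : ℝ)))‖) ^ 2)
      = ((N:ℝ) ^ 2)⁻¹ * (∫ τ in a..b, S τ * (starRingEnd ℂ) (S τ)).re := by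
    have hpt : ∀ τ : ℝ, (‖(1 / (N : ℂ)) * ∑ k ∈ Finset.Icc 1 N,
          Complex.exp (2 * Real.pi * Complex.I *
            ((A k : ℝ) + (k : ℝ) * τ * (θ : ℝ)))‖) ^ 2
        = ((N:ℝ) ^ 2)⁻¹ * (S τ * (starRingEnd ℂ) (S τ)).re := by
      intro τ
      have : ((1 : ℂ) / (N : ℂ)) * ∑ k ∈ Finset.Icc 1 N,
          Complex.exp (2 * Real.pi * Complex.I *
            ((A k : ℝ) + (k : ℝ) * τ * (θ : ℝ))) = (1 / (N:ℂ)) * S τ := rfl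
      rw [this, Complex.sq_norm, map_mul Complex.normSq, Complex.mul_conj, Complex.ofReal_re]
      congr 1
      rw [one_div, map_inv₀]
      norm_num [Complex.normSq_natCast]
      rw [sq, mul_inv]
    rw [intervalIntegral.integral_congr (g := fun τ =>
        ((N:ℝ) ^ 2)⁻¹ * (S τ * (starRingEnd ℂ) (S τ)).re) (fun τ _ => hpt τ)]
    rw [intervalIntegral.integral_const_mul]
    congr 1
    have := Complex.reCLM.intervalIntegral_comp_comm
      (μ := volume) (a := a) (b := b) (f := fun τ => S τ * (starRingEnd ℂ) (S τ))
      (hSSc.intervalIntegrable a b)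
    simpa using this
  rw [hIeq]
  -- numeric conclusion
  have hlog2 : (0:ℝ) < Real.log 2 := Real.log_pos (by norm_num)
  have hlogN : Real.log 2 ≤ Real.log N :=
    Real.log_le_log (by norm_num) (by exact_mod_cast hN)
  have hlogNpos : (0:ℝ) < Real.log N := lt_of_lt_of_le hlog2 hlogN
  have step1 : ((N:ℝ) ^ 2)⁻¹ * (∫ τ in a..b, S τ * (starRingEnd ℂ) (S τ)).re
      ≤ ((b - a) + (Real.pi * |θ|)⁻¹ * (2 * (1 + Real.log N))) / N := by
    calc ((N:ℝ) ^ 2)⁻¹ * (∫ τ in a..b, S τ * (starRingEnd ℂ) (S τ)).re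
        ≤ ((N:ℝ) ^ 2)⁻¹ * ‖∫ τ in a..b, S τ * (starRingEnd ℂ) (S τ)‖ :=
          mul_le_mul_of_nonneg_left (Complex.re_le_norm _) (by positivity)
      _ ≤ ((N:ℝ) ^ 2)⁻¹ * ((N:ℝ) * ((b - a) + (Real.pi * |θ|)⁻¹ * (2 * (1 + Real.log N)))) :=
          mul_le_mul_of_nonneg_left hT (by positivity)
      _ = ((b - a) + (Real.pi * |θ|)⁻¹ * (2 * (1 + Real.log N))) / N := by
          field_simp
  refine step1.trans ?_
  rw [div_le_div_iff₀ hNR hNR]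
  have key : (b - a) + (Real.pi * |θ|)⁻¹ * (2 * (1 + Real.log N))
      ≤ ((b - a) / Real.log 2 + 2 / (Real.pi * |θ|) * (1 / Real.log 2 + 1)) * Real.log N := by
    have h1 : (b - a) ≤ (b - a) / Real.log 2 * Real.log N := by
      rw [div_mul_eq_mul_div, le_div_iff₀ hlog2]
      calc (b - a) * Real.log 2 ≤ (b - a) * Real.log N := by gcongr
        _ = (b - a) * Real.log N := rfl
    have h2 : 1 + Real.log N ≤ (1 / Real.log 2 + 1) * Real.log N := by
      have : (1:ℝ) ≤ 1 / Real.log 2 * Real.log N := by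
        rw [div_mul_eq_mul_div, one_mul, le_div_iff₀ hlog2, one_mul]
        exact hlogN
      nlinarith
    have h3 : (Real.pi * |θ|)⁻¹ * (2 * (1 + Real.log N))
        ≤ 2 / (Real.pi * |θ|) * ((1 / Real.log 2 + 1) * Real.log N) := by
      have hpos : (0:ℝ) < Real.pi * |θ| := by positivity
      rw [div_mul_eq_mul_div]
      rw [inv_mul_eq_div, div_le_div_iff₀ hpos hpos]
      nlinarith [mul_pos hpos hpos]
    calc (b - a) + (Real.pi * |θ|)⁻¹ * (2 * (1 + Real.log N))
        ≤ (b - a) / Real.log 2 * Real.log N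
            + 2 / (Real.pi * |θ|) * ((1 / Real.log 2 + 1) * Real.log N) := by
          exact add_le_add h1 h3
      _ = ((b - a) / Real.log 2 + 2 / (Real.pi * |θ|) * (1 / Real.log 2 + 1)) * Real.log N := by
          ring
  calc ((b - a) + (Real.pi * |θ|)⁻¹ * (2 * (1 + Real.log N))) * N
      ≤ (((b - a) / Real.log 2 + 2 / (Real.pi * |θ|) * (1 / Real.log 2 + 1)) * Real.log N) * N :=
        by gcongr
  _ = ((b - a) / Real.log 2 + 2 / (Real.pi * |θ|) * (1 / Real.log 2 + 1)) * Real.log N * N := rfl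

/-- the mean-square bound `∫_a^b |S_h(N,τ)|² dτ ≤ C log N / N` for the
normalized Weyl sums `S_h(N,τ) = (1/N) ∑_{k=1}^N e^{2πi (h·α_k + kτ (h·ω))}`. -/
theorem stmt_1 (d : ℕ) (hd : 1 ≤ d) (ω : Fin d → ℝ) (h : Fin d → ℤ) (hh : h ≠ 0)
    (hhω : (∑ i, (h i : ℝ) * ω i) ≠ 0) (a b : ℝ) (hab : a < b)
    (α : ℕ → Fin d → ℝ) :
    ∃ C > (0 : ℝ), ∀ N : ℕ, 2 ≤ N →
      (∫ τ in a..b,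
          (‖(1 / (N : ℂ)) * ∑ k ∈ Finset.Icc 1 N,
            Complex.exp (2 * Real.pi * Complex.I *
              (((∑ i, (h i : ℝ) * α k i) : ℝ) +
                (k : ℝ) * τ * ((∑ i, (h i : ℝ) * ω i) : ℝ)))‖) ^ 2)
        ≤ C * Real.log N / N := by
  refine ⟨(b - a) / Real.log 2
      + 2 / (Real.pi * |∑ i, (h i : ℝ) * ω i|) * (1 / Real.log 2 + 1), ?_, ?_⟩
  · have h2 : (0:ℝ) < Real.log 2 := Real.log_pos (by norm_num)
    have hπ : (0:ℝ) < Real.pi := Real.pi_pos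
    have hθ' : (0:ℝ) < |∑ i, (h i : ℝ) * ω i| := abs_pos.2 hhω
    have hba : (0:ℝ) < b - a := by linarith
    positivity
  · intro N hN
    exact mean_square _ hhω a b hab (fun k => ∑ i, (h i : ℝ) * α k i) N hN
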